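/- arXiv:math/0301353 — 2 statements merged into one kernel-verified Lean document; each statement's English description precedes it below -/
import Mathlib

section
/- If the evaluation map α : P* ⊗_{End_R(P)} P → R is surjective, then it is an isomorphism of R-R bimodules. -/
/-!
STATEMENT 0: Existence of the tensor product of bimodules over noncommutative
rings, with its universal property.

A right `B`-action on `M` is encoded as a left action of `Bᵐᵒᵖ`.
-/

open MulOpposite

/-- `f : M → N → L` is `B`-balanced and `A`-`C` bilinear, where `M` is an
`A`-`B` bimodule, `N` is a `B`-`C` bimodule and `L` is an `A`-`C` bimodule. -/
structure IsBalancedBilinear (A B C : Type) [Ring A] [Ring B] [Ring C]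
    {M N L : Type} [AddCommGroup M] [Module A M] [Module Bᵐᵒᵖ M]
    [AddCommGroup N] [Module B N] [Module Cᵐᵒᵖ N]
    [AddCommGroup L] [Module A L] [Module Cᵐᵒᵖ L]
    (f : M → N → L) : Prop where
  add_left : ∀ m m' n, f (m + m') n = f m n + f m' n
  add_right : ∀ m n n', f m (n + n') = f m n + f m n'
  balanced : ∀ (b : B) m n, f (op b • m) n = f m (b • n)
  map_smul_left : ∀ (a : A) m n, f (a • m) n = a • f m n
  map_smul_right : ∀ (c : C) m n, f m (op c • n) = op c • f m n

/-- `α` is a homomorphism of `A`-`C` bimodules. -/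
def IsBimodHom (A C : Type) [Ring A] [Ring C] {P L : Type}
    [AddCommGroup P] [Module A P] [Module Cᵐᵒᵖ P]
    [AddCommGroup L] [Module A L] [Module Cᵐᵒᵖ L] (α : P → L) : Prop :=
  (∀ x y, α (x + y) = α x + α y) ∧
  (∀ (a : A) x, α (a • x) = a • α x) ∧
  (∀ (c : Cᵐᵒᵖ) x, α (c • x) = c • α x)

/-- A realization of the tensor product `M ⊗[B] N` of an `A`-`B` bimodule `M`
and a `B`-`C` bimodule `N`: an `A`-`C` bimodule `P` together with a
`B`-balanced `A`-`C` bilinear map `τ` which is universal among such maps. -/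
structure BimodTensorProduct (A B C : Type) [Ring A] [Ring B] [Ring C]
    (M N : Type) [AddCommGroup M] [Module A M] [Module Bᵐᵒᵖ M] [SMulCommClass A Bᵐᵒᵖ M]
    [AddCommGroup N] [Module B N] [Module Cᵐᵒᵖ N] [SMulCommClass B Cᵐᵒᵖ N] : Type 1 where
  P : Type
  [instAdd : AddCommGroup P]
  [instL : Module A P]
  [instR : Module Cᵐᵒᵖ P]
  [instComm : SMulCommClass A Cᵐᵒᵖ P]
  τ : M → N → P
  balanced_bilinear : IsBalancedBilinear A B C τ
  universal : ∀ (L : Type) [AddCommGroup L] [Module A L] [Module Cᵐᵒᵖ L]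
      [SMulCommClass A Cᵐᵒᵖ L] (φ : M → N → L), IsBalancedBilinear A B C φ →
      ∃! α : P → L, IsBimodHom A C α ∧ ∀ m n, φ m n = α (τ m n)

section Instances

variable (R : Type) [Ring R] (P : Type) [AddCommGroup P] [Module Rᵐᵒᵖ P]

/-- The right action of `E = End_R(P)` on `P* = Hom_R(P, R)` by precomposition,
encoded as a left `Eᵐᵒᵖ`-action. -/
instance instDualEndModule : Module (Module.End Rᵐᵒᵖ P)ᵐᵒᵖ (P →ₗ[Rᵐᵒᵖ] R) where
  smul g f := f.comp g.unop
  one_smul f := by ext p; rfl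
  mul_smul g h f := by ext p; rfl
  smul_zero g := by ext p; rfl
  smul_add g f₁ f₂ := by ext p; rfl
  add_smul g h f := by
    ext p
    show f ((g.unop + h.unop) p) = f (g.unop p) + f (h.unop p)
    rw [LinearMap.add_apply, map_add]
  zero_smul f := by
    ext p
    show f ((0 : Module.End Rᵐᵒᵖ P) p) = 0
    rw [LinearMap.zero_apply, map_zero]

instance instDualSMulComm :
    SMulCommClass R (Module.End Rᵐᵒᵖ P)ᵐᵒᵖ (P →ₗ[Rᵐᵒᵖ] R) :=
  ⟨fun _ _ _ => rfl⟩

end Instances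


/-- If the evaluation map `α : P* ⊗[End_R(P)] P → R` is
surjective, then it is an isomorphism of `R`-`R` bimodules (being an `R`-`R`
bimodule homomorphism, it is in addition bijective). -/
theorem evaluation_surjective_bijective (R : Type) [Ring R] (P : Type)
    [AddCommGroup P] [Module Rᵐᵒᵖ P]
    (Tp : BimodTensorProduct R (Module.End Rᵐᵒᵖ P) R (P →ₗ[Rᵐᵒᵖ] R) P)
    (α : Tp.P → R)
    (hα : letI := Tp.instAdd; letI := Tp.instL; letI := Tp.instR; letI := Tp.instComm
      IsBimodHom R R α ∧ ∀ (f : P →ₗ[Rᵐᵒᵖ] R) (p : P), α (Tp.τ f p) = f p)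
    (hsurj : Function.Surjective α) :
    Function.Bijective α := by
  letI := Tp.instAdd; letI := Tp.instL; letI := Tp.instR; letI := Tp.instComm
  obtain ⟨⟨hadd, hl, hr⟩, heval⟩ := hα
  refine ⟨?_, hsurj⟩
  have hbb := Tp.balanced_bilinear
  -- α as additive hom
  set αh : Tp.P →+ R := AddMonoidHom.mk' α hadd with hαh
  -- τ is additive in the first argument
  have hτ0 : ∀ p : P, Tp.τ 0 p = 0 := by
    intro p
    have h := hbb.add_left 0 0 p
    rw [add_zero] at h
    exact left_eq_add.mp h
  -- the trace ideal
  set S : Set R := {r | ∃ (f : P →ₗ[Rᵐᵒᵖ] R) (p : P), f p = r} with hS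
  set T : Submodule R R := Submodule.span R S with hTdef
  have hSright : ∀ r ∈ S, ∀ c : R, r * c ∈ S := by
    rintro r ⟨f, p, rfl⟩ c
    exact ⟨f, op c • p, by rw [map_smul, op_smul_eq_mul]⟩
  have hTright : ∀ x ∈ T, ∀ c : R, x * c ∈ T := by
    intro x hx c
    induction hx using Submodule.span_induction with
    | mem r hr => exact Submodule.subset_span (hSright r hr c)
    | zero => rw [zero_mul]; exact T.zero_mem
    | add a b _ _ ha hb => rw [add_mul]; exact T.add_mem ha hb
    | smul r a _ ha => rw [smul_eq_mul, mul_assoc, ← smul_eq_mul]; exact T.smul_mem r ha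
  -- right Rᵐᵒᵖ-module structure on T
  letI : SMul Rᵐᵒᵖ T := ⟨fun c x => ⟨x.1 * c.unop, hTright x.1 x.2 c.unop⟩⟩
  have hmops : ∀ (c : Rᵐᵒᵖ) (x : T), ((c • x : T) : R) = x.1 * c.unop := fun _ _ => rfl
  letI : Module Rᵐᵒᵖ T :=
    { one_smul := fun x => Subtype.ext (mul_one x.1)
      mul_smul := fun a b x => Subtype.ext
        (by simp only [hmops, unop_mul, mul_assoc])
      smul_zero := fun a => Subtype.ext (by simp only [hmops, ZeroMemClass.coe_zero, zero_mul])
      smul_add := fun a x y => Subtype.ext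
        (by simp only [hmops, AddMemClass.coe_add, add_mul])
      add_smul := fun a b x => Subtype.ext
        (by simp only [hmops, AddMemClass.coe_add, unop_add, mul_add])
      zero_smul := fun x => Subtype.ext (by simp only [hmops, ZeroMemClass.coe_zero, unop_zero, mul_zero]) }
  letI : SMulCommClass R Rᵐᵒᵖ T :=
    ⟨fun r c x => Subtype.ext (by
      rw [hmops]
      show r • ((c • x : T) : R) = (r • x : T).1 * c.unop
      rw [hmops]
      show r * (x.1 * c.unop) = (r • x.1) * c.unop
      rw [smul_eq_mul, mul_assoc])⟩
  -- the corestricted evaluation map into T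
  have hφT : IsBalancedBilinear R (Module.End Rᵐᵒᵖ P) R
      (fun (f : P →ₗ[Rᵐᵒᵖ] R) (p : P) =>
        (⟨f p, Submodule.subset_span ⟨f, p, rfl⟩⟩ : T)) := by
    constructor
    · intro f f' p; exact Subtype.ext (LinearMap.add_apply f f' p)
    · intro f p p'; exact Subtype.ext (map_add f p p')
    · intro b f p; exact Subtype.ext rfl
    · intro a f p; exact Subtype.ext rfl
    · intro c f p
      refine Subtype.ext ?_
      rw [hmops]
      exact (map_smul f (op c) p).trans (op_smul_eq_mul c (f p))
  -- plain evaluation is balanced bilinear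
  have hev : IsBalancedBilinear R (Module.End Rᵐᵒᵖ P) R
      (fun (f : P →ₗ[Rᵐᵒᵖ] R) (p : P) => f p) := by
    constructor
    · intro f f' p; exact LinearMap.add_apply f f' p
    · intro f p p'; exact map_add f p p'
    · intro b f p; rfl
    · intro a f p; rfl
    · intro c f p; exact map_smul f (op c) p
  obtain ⟨e, ⟨heHom, heEq⟩, heUniq⟩ := Tp.universal R _ hev
  have hαe : α = e := heUniq α ⟨⟨hadd, hl, hr⟩, fun f p => (heval f p).symm⟩
  obtain ⟨β, ⟨hβHom, hβEq⟩, _⟩ := Tp.universal T _ hφT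
  have hvβ : (fun x => ((β x : T) : R)) = e := by
    refine heUniq _ ⟨⟨?_, ?_, ?_⟩, ?_⟩
    · intro x y
      show ((β (x + y) : T) : R) = ((β x : T) : R) + ((β y : T) : R)
      rw [hβHom.1 x y]; rfl
    · intro a x
      show ((β (a • x) : T) : R) = a • ((β x : T) : R)
      rw [hβHom.2.1 a x]; rfl
    · intro c x
      show ((β (c • x) : T) : R) = c • ((β x : T) : R)
      rw [hβHom.2.2 c x, hmops]; rfl
    · intro f p
      have := hβEq f p
      exact congrArg Subtype.val this
  have hrange : ∀ x : Tp.P, α x ∈ T := by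
    intro x
    rw [hαe, ← congrFun hvβ x]
    exact (β x).2
  -- 1 is in the trace ideal
  obtain ⟨x1, hx1⟩ := hsurj 1
  have h1T : (1 : R) ∈ Submodule.span R S := by rw [← hTdef, ← hx1]; exact hrange x1
  obtain ⟨n, c, v, hcv⟩ := Submodule.mem_span_set'.mp h1T
  choose F Q hFQ using fun i => (v i).2
  set g : Fin n → (P →ₗ[Rᵐᵒᵖ] R) := fun i => c i • F i with hg
  have hsum : ∑ i, g i (Q i) = 1 := by
    rw [← hcv]
    refine Finset.sum_congr rfl fun i _ => ?_
    show c i • F i (Q i) = c i • ((v i : R))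
    rw [hFQ]
  set t0 : Tp.P := ∑ i, Tp.τ (g i) (Q i) with ht0
  have hαt0 : α t0 = 1 := by
    rw [ht0]
    show αh (∑ i, Tp.τ (g i) (Q i)) = 1
    rw [map_sum]
    rw [← hsum]
    exact Finset.sum_congr rfl fun i _ => heval (g i) (Q i)
  -- key identity 1 : τ f p = op (f p) • t0
  have key1 : ∀ (f : P →ₗ[Rᵐᵒᵖ] R) (p : P), Tp.τ f p = op (f p) • t0 := by
    intro f p
    have hb : ∀ i : Fin n, ∃ b : Module.End Rᵐᵒᵖ P,
        op b • g i = (g i (Q i)) • f ∧ b • p = op (f p) • Q i := by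
      intro i
      refine ⟨{ toFun := fun x => op (f x) • Q i
                map_add' := by
                  intro x y
                  show op (f (x + y)) • Q i = op (f x) • Q i + op (f y) • Q i
                  rw [map_add, op_add, add_smul]
                map_smul' := by
                  intro r x
                  show op (f (r • x)) • Q i = r • (op (f x) • Q i)
                  rw [map_smul, ← mul_smul]
                  congr 1 }, ?_, rfl⟩
      refine LinearMap.ext fun x => ?_
      show g i (op (f x) • Q i) = (g i (Q i)) • f x
      rw [map_smul, op_smul_eq_mul, smul_eq_mul]
    choose b hb1 hb2 using hb
    have τadd : ∀ (F G : P →ₗ[Rᵐᵒᵖ] R), Tp.τ (F + G) p = Tp.τ F p + Tp.τ G p :=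
      fun F G => hbb.add_left F G p
    have hτsum : Tp.τ (∑ i, (g i (Q i)) • f) p = ∑ i, Tp.τ ((g i (Q i)) • f) p :=
      map_sum (AddMonoidHom.mk' (fun h => Tp.τ h p) τadd) _ _
    calc Tp.τ f p = Tp.τ ((1 : R) • f) p := by rw [one_smul]
      _ = Tp.τ ((∑ i, g i (Q i)) • f) p := by rw [hsum]
      _ = Tp.τ (∑ i, (g i (Q i)) • f) p := by rw [Finset.sum_smul]
      _ = ∑ i, Tp.τ ((g i (Q i)) • f) p := hτsum
      _ = ∑ i, Tp.τ (op (b i) • g i) p := by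
          refine Finset.sum_congr rfl fun i _ => ?_; rw [hb1]
      _ = ∑ i, Tp.τ (g i) ((b i) • p) := by
          refine Finset.sum_congr rfl fun i _ => ?_; rw [hbb.balanced]
      _ = ∑ i, Tp.τ (g i) (op (f p) • Q i) := by
          refine Finset.sum_congr rfl fun i _ => ?_; rw [hb2]
      _ = ∑ i, op (f p) • Tp.τ (g i) (Q i) := by
          refine Finset.sum_congr rfl fun i _ => ?_; rw [hbb.map_smul_right]
      _ = op (f p) • t0 := (Finset.smul_sum).symm
  -- key identity 2 : τ f p = (f p) • t0
  have key2 : ∀ (f : P →ₗ[Rᵐᵒᵖ] R) (p : P), Tp.τ f p = (f p) • t0 := by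
    intro f p
    have hb : ∀ i : Fin n, ∃ b : Module.End Rᵐᵒᵖ P,
        op b • f = (f p) • g i ∧ b • Q i = op (g i (Q i)) • p := by
      intro i
      refine ⟨{ toFun := fun x => op (g i x) • p
                map_add' := by
                  intro x y
                  show op (g i (x + y)) • p = op (g i x) • p + op (g i y) • p
                  rw [map_add, op_add, add_smul]
                map_smul' := by
                  intro r x
                  show op (g i (r • x)) • p = r • (op (g i x) • p)
                  rw [map_smul, ← mul_smul]
                  congr 1 }, ?_, rfl⟩
      refine LinearMap.ext fun x => ?_
      show f (op (g i x) • p) = (f p) • g i x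
      rw [map_smul, op_smul_eq_mul, smul_eq_mul]
    choose b hb1 hb2 using hb
    calc Tp.τ f p = op (1 : R) • Tp.τ f p := by rw [op_one, one_smul]
      _ = op (∑ i, g i (Q i)) • Tp.τ f p := by rw [hsum]
      _ = (∑ i, op (g i (Q i))) • Tp.τ f p := by rw [Finset.op_sum]
      _ = ∑ i, op (g i (Q i)) • Tp.τ f p := by rw [Finset.sum_smul]
      _ = ∑ i, Tp.τ f (op (g i (Q i)) • p) := by
          refine Finset.sum_congr rfl fun i _ => ?_; rw [hbb.map_smul_right]
      _ = ∑ i, Tp.τ f ((b i) • Q i) := by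
          refine Finset.sum_congr rfl fun i _ => ?_; rw [hb2]
      _ = ∑ i, Tp.τ (op (b i) • f) (Q i) := by
          refine Finset.sum_congr rfl fun i _ => ?_; rw [hbb.balanced]
      _ = ∑ i, Tp.τ ((f p) • g i) (Q i) := by
          refine Finset.sum_congr rfl fun i _ => ?_; rw [hb1]
      _ = ∑ i, (f p) • Tp.τ (g i) (Q i) := by
          refine Finset.sum_congr rfl fun i _ => ?_; rw [hbb.map_smul_left]
      _ = (f p) • t0 := (Finset.smul_sum).symm
  -- key identity 3 : r • t0 = op r • t0
  have key3 : ∀ r : R, r • t0 = op r • t0 := by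
    intro r
    calc r • t0 = ∑ i, r • Tp.τ (g i) (Q i) := Finset.smul_sum
      _ = ∑ i, Tp.τ (r • g i) (Q i) :=
          Finset.sum_congr rfl fun i _ => (hbb.map_smul_left r (g i) (Q i)).symm
      _ = ∑ i, op ((r • g i) (Q i)) • t0 := by
          refine Finset.sum_congr rfl fun i _ => ?_; rw [key1]
      _ = ∑ i, op (r * g i (Q i)) • t0 := rfl
      _ = (∑ i, op (r * g i (Q i))) • t0 := (Finset.sum_smul).symm
      _ = op (∑ i, r * g i (Q i)) • t0 := by rw [Finset.op_sum]
      _ = op (r * ∑ i, g i (Q i)) • t0 := by rw [Finset.mul_sum]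
      _ = op r • t0 := by rw [hsum, mul_one]
  -- the candidate inverse composed with α, compared with the identity
  obtain ⟨u, _, huUniq⟩ := Tp.universal Tp.P Tp.τ Tp.balanced_bilinear
  have hid : (fun x : Tp.P => x) = u :=
    huUniq _ ⟨⟨fun _ _ => rfl, fun _ _ => rfl, fun _ _ => rfl⟩, fun _ _ => rfl⟩
  have hδ : (fun x : Tp.P => α x • t0) = u := by
    refine huUniq _ ⟨⟨?_, ?_, ?_⟩, ?_⟩
    · intro x y
      show α (x + y) • t0 = α x • t0 + α y • t0
      rw [hadd, add_smul]
    · intro a x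
      show α (a • x) • t0 = a • (α x • t0)
      rw [hl, smul_eq_mul, mul_smul]
    · intro cc x
      show α (cc • x) • t0 = cc • (α x • t0)
      rw [hr]
      calc (cc • α x) • t0 = (α x * cc.unop) • t0 := by rw [← op_smul_eq_mul, op_unop]
        _ = α x • (cc.unop • t0) := mul_smul _ _ _
        _ = α x • (op cc.unop • t0) := by rw [key3]
        _ = α x • (cc • t0) := by rw [op_unop]
        _ = cc • (α x • t0) := smul_comm (α x) cc t0
    · intro f p
      beta_reduce
      rw [heval]
      exact key2 f p
  have hfix : ∀ x : Tp.P, α x • t0 = x := fun x =>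
    ((congrFun hδ x).trans (congrFun hid x).symm)
  intro x y hxy
  rw [← hfix x, ← hfix y, hxy]
end

section
/- If the map β : P ⊗_R P* → End_R(P) is surjective, then it is an isomorphism of End_R(P)-End_R(P) bimodules. -/
/-!
STATEMENT 0: Existence of the tensor product of bimodules over noncommutative
rings, with its universal property.

A right `B`-action on `M` is encoded as a left action of `Bᵐᵒᵖ`.
-/

open MulOpposite

/-- If the map `β : P ⊗[R] P* → End_R(P)` is surjective, then
it is an isomorphism of `End_R(P)`-`End_R(P)` bimodules (being an `E`-`E`
bimodule homomorphism, it is in addition bijective). -/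
theorem beta_surjective_bijective (R : Type) [Ring R] (P : Type)
    [AddCommGroup P] [Module Rᵐᵒᵖ P]
    (Tp : BimodTensorProduct (Module.End Rᵐᵒᵖ P) R (Module.End Rᵐᵒᵖ P)
      P (P →ₗ[Rᵐᵒᵖ] R))
    (β : Tp.P → Module.End Rᵐᵒᵖ P)
    (hβ : letI := Tp.instAdd; letI := Tp.instL; letI := Tp.instR; letI := Tp.instComm
      IsBimodHom (Module.End Rᵐᵒᵖ P) (Module.End Rᵐᵒᵖ P) β ∧
      ∀ (p : P) (f : P →ₗ[Rᵐᵒᵖ] R) (p' : P), β (Tp.τ p f) p' = op (f p') • p)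
    (hsurj : Function.Surjective β) :
    Function.Bijective β := by
  letI := Tp.instAdd; letI := Tp.instL; letI := Tp.instR; letI := Tp.instComm
  obtain ⟨⟨βadd, βsL, βsR⟩, hτβ⟩ := hβ
  have hbb := Tp.balanced_bilinear
  have βzero : β 0 = 0 := by
    have h := βadd 0 0
    rw [add_zero] at h
    exact left_eq_add.mp h
  have βneg : ∀ x, β (-x) = -β x := by
    intro x
    have h := βadd x (-x)
    rw [add_neg_cancel, βzero] at h
    exact (neg_eq_of_add_eq_zero_right h.symm).symm
  -- the sub-bimodule generated by the image of τ
  set S : AddSubgroup Tp.P :=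
    AddSubgroup.closure (Set.range fun mn : P × (P →ₗ[Rᵐᵒᵖ] R) => Tp.τ mn.1 mn.2) with hSdef
  have hgen : ∀ (m : P) (n : P →ₗ[Rᵐᵒᵖ] R), Tp.τ m n ∈ S := fun m n =>
    AddSubgroup.subset_closure ⟨(m, n), rfl⟩
  have hSL : ∀ (a : Module.End Rᵐᵒᵖ P) (x : Tp.P), x ∈ S → a • x ∈ S := by
    intro a x hx
    refine AddSubgroup.closure_induction ?_ ?_ ?_ ?_ hx
    · rintro _ ⟨⟨p, f⟩, rfl⟩
      show a • Tp.τ p f ∈ S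
      rw [← hbb.map_smul_left]
      exact hgen _ _
    · rw [smul_zero]; exact S.zero_mem
    · intro y z _ _ ihy ihz
      rw [smul_add]; exact S.add_mem ihy ihz
    · intro y _ ihy
      rw [smul_neg]; exact S.neg_mem ihy
  have hSR : ∀ (c : (Module.End Rᵐᵒᵖ P)ᵐᵒᵖ) (x : Tp.P), x ∈ S → c • x ∈ S := by
    intro c x hx
    refine AddSubgroup.closure_induction ?_ ?_ ?_ ?_ hx
    · rintro _ ⟨⟨p, f⟩, rfl⟩
      show c • Tp.τ p f ∈ S
      have h := hbb.map_smul_right c.unop p f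
      rw [op_unop] at h
      rw [← h]
      exact hgen _ _
    · rw [smul_zero]; exact S.zero_mem
    · intro y z _ _ ihy ihz
      rw [smul_add]; exact S.add_mem ihy ihz
    · intro y _ ihy
      rw [smul_neg]; exact S.neg_mem ihy
  -- bimodule structure on S
  letI : SMul (Module.End Rᵐᵒᵖ P) S := ⟨fun a x => ⟨a • (x : Tp.P), hSL a x x.2⟩⟩
  letI : SMul (Module.End Rᵐᵒᵖ P)ᵐᵒᵖ S := ⟨fun c x => ⟨c • (x : Tp.P), hSR c x x.2⟩⟩
  letI : Module (Module.End Rᵐᵒᵖ P) S :=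
    Function.Injective.module _ S.subtype Subtype.coe_injective (fun _ _ => rfl)
  letI : Module (Module.End Rᵐᵒᵖ P)ᵐᵒᵖ S :=
    Function.Injective.module _ S.subtype Subtype.coe_injective (fun _ _ => rfl)
  letI : SMulCommClass (Module.End Rᵐᵒᵖ P) (Module.End Rᵐᵒᵖ P)ᵐᵒᵖ S :=
    ⟨fun a c x => Subtype.ext (smul_comm a c (x : Tp.P))⟩
  -- τ with values in S
  have hbb' : IsBalancedBilinear (Module.End Rᵐᵒᵖ P) R (Module.End Rᵐᵒᵖ P)
      (fun m n => (⟨Tp.τ m n, hgen m n⟩ : S)) := by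
    constructor
    · intro m m' n; exact Subtype.ext (hbb.add_left m m' n)
    · intro m n n'; exact Subtype.ext (hbb.add_right m n n')
    · intro b m n; exact Subtype.ext (hbb.balanced b m n)
    · intro a m n; exact Subtype.ext (hbb.map_smul_left a m n)
    · intro c m n; exact Subtype.ext (hbb.map_smul_right c m n)
  obtain ⟨α, ⟨⟨hαadd, hαsL, hαsR⟩, hατ⟩, -⟩ := Tp.universal (↥S) _ hbb'
  obtain ⟨α₀, -, huniq⟩ := Tp.universal Tp.P Tp.τ Tp.balanced_bilinear
  have h1 : (fun x : Tp.P => ((α x : ↥S) : Tp.P)) = α₀ := by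
    refine huniq _ ⟨⟨?_, ?_, ?_⟩, ?_⟩
    · intro x y
      show ((α (x + y) : ↥S) : Tp.P) = ((α x : ↥S) : Tp.P) + ((α y : ↥S) : Tp.P)
      rw [hαadd]; rfl
    · intro a x
      show ((α (a • x) : ↥S) : Tp.P) = a • ((α x : ↥S) : Tp.P)
      rw [hαsL]; rfl
    · intro c x
      show ((α (c • x) : ↥S) : Tp.P) = c • ((α x : ↥S) : Tp.P)
      rw [hαsR]; rfl
    · intro m n; exact congrArg Subtype.val (hατ m n)
  have h2 : (fun x : Tp.P => x) = α₀ :=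
    huniq _ ⟨⟨fun _ _ => rfl, fun _ _ => rfl, fun _ _ => rfl⟩, fun _ _ => rfl⟩
  have hmem : ∀ x : Tp.P, x ∈ S := fun x =>
    (congrFun (h1.trans h2.symm) x) ▸ (α x).2
  -- key identity
  have key : ∀ x y : Tp.P, β x • y = op (β y) • x := by
    intro x
    refine AddSubgroup.closure_induction ?_ ?_ ?_ ?_ (hmem x)
    · rintro _ ⟨⟨p, f⟩, rfl⟩
      show ∀ y, β (Tp.τ p f) • y = op (β y) • Tp.τ p f
      intro y
      refine AddSubgroup.closure_induction ?_ ?_ ?_ ?_ (hmem y)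
      · rintro _ ⟨⟨q, g⟩, rfl⟩
        show β (Tp.τ p f) • Tp.τ q g = op (β (Tp.τ q g)) • Tp.τ p f
        have lhs : β (Tp.τ p f) • Tp.τ q g = Tp.τ p ((f q) • g) := by
          rw [← hbb.map_smul_left, Module.End.smul_def, hτβ]
          exact hbb.balanced (f q) p g
        have rhs : op (β (Tp.τ q g)) • Tp.τ p f = Tp.τ p ((f q) • g) := by
          rw [← hbb.map_smul_right]
          congr 1
          refine LinearMap.ext fun p' => ?_
          show f (β (Tp.τ q g) p') = ((f q) • g) p'
          rw [hτβ, map_smul, LinearMap.smul_apply, op_smul_eq_mul, smul_eq_mul]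
        rw [lhs, rhs]
      · rw [smul_zero, βzero, op_zero, zero_smul]
      · intro y z _ _ ihy ihz
        rw [smul_add, ihy, ihz, βadd, op_add, add_smul]
      · intro y _ ihy
        rw [smul_neg, ihy, βneg, op_neg, neg_smul]
    · intro y
      rw [βzero, zero_smul, smul_zero]
    · intro x x' _ _ ihx ihx' y
      rw [βadd, add_smul, ihx, ihx', ← smul_add]
    · intro x _ ihx y
      rw [βneg, neg_smul, ihx, ← smul_neg]
  obtain ⟨e, he⟩ := hsurj 1
  refine ⟨fun x y hxy => ?_, hsurj⟩
  have hz : β (x - y) = 0 := by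
    rw [sub_eq_add_neg, βadd, βneg, hxy, add_neg_cancel]
  have h := key (x - y) e
  rw [hz, zero_smul, he, op_one, one_smul] at h
  exact sub_eq_zero.mp h.symm
end
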